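/- Let F be a field, q ∈ F, and s, t ≥ 1 natural numbers with q + 1 ≠ 0 and q²(s−1)(t−1) − 1 ≠ 0 in F. Let w be any vertex in the Y-part of K_{s,t}. Then ∑_{u} (1 + (q − 1)·D(u,w))·x(u) = 1, where the sum runs over all vertices u of K_{s,t}, D is the q-distance matrix of K_{s,t}, and x is the vector defined in the context. -/

import Mathlib

/-- The `q`-distance matrix of the complete bipartite graph `K_{s,t}`,
indexed by `Fin s ⊕ Fin t`: diagonal entries are `0`, entries between the two
parts are `1`, and off-diagonal entries within a part are `q + 1`. -/
def qDistKst (F : Type*) [Field F] (q : F) (s t : ℕ) :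
    Matrix (Fin s ⊕ Fin t) (Fin s ⊕ Fin t) F :=
  Matrix.of fun u v =>
    if u = v then 0 else if u.isLeft = v.isLeft then q + 1 else 1

/-- The special vector `x` of `K_{s,t}`. -/
def xVecKst (F : Type*) [Field F] (q : F) (s t : ℕ) :
    Fin s ⊕ Fin t → F :=
  Sum.elim
    (fun _ => (q * ((t : F) - 1) - 1) /
      ((q + 1) * (q ^ 2 * ((s : F) - 1) * ((t : F) - 1) - 1)))
    (fun _ => (q * ((s : F) - 1) - 1) /
      ((q + 1) * (q ^ 2 * ((s : F) - 1) * ((t : F) - 1) - 1)))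

theorem sum_qdist_x_eq_one (F : Type*) [Field F] (q : F)
    (s t : ℕ) (hs : 1 ≤ s) (ht : 1 ≤ t) (hq : q + 1 ≠ 0)
    (hΔ : q ^ 2 * ((s : F) - 1) * ((t : F) - 1) - 1 ≠ 0) (w : Fin t) :
    ∑ u, (1 + (q - 1) * qDistKst F q s t u (Sum.inr w)) * xVecKst F q s t u
      = 1 := by
  classical
  set d : F := (q + 1) * (q ^ 2 * ((s : F) - 1) * ((t : F) - 1) - 1) with hd
  have hdne : d ≠ 0 := mul_ne_zero hq hΔ
  have hvX : ∀ a : Fin s, xVecKst F q s t (Sum.inl a) = (q * ((t : F) - 1) - 1) / d :=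
    fun a => rfl
  have hvY : ∀ b : Fin t, xVecKst F q s t (Sum.inr b) = (q * ((s : F) - 1) - 1) / d :=
    fun b => rfl
  have e1 : ∀ a : Fin s, qDistKst F q s t (Sum.inl a) (Sum.inr w) = 1 := by
    intro a; simp [qDistKst]
  have e2 : qDistKst F q s t (Sum.inr w) (Sum.inr w) = 0 := by
    simp [qDistKst]
  have e3 : ∀ b : Fin t, b ≠ w → qDistKst F q s t (Sum.inr b) (Sum.inr w) = q + 1 := by
    intro b hb; simp [qDistKst, hb]
  rw [Fintype.sum_sum_type]
  have h1 : ∀ a : Fin s,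
      (1 + (q - 1) * qDistKst F q s t (Sum.inl a) (Sum.inr w)) * xVecKst F q s t (Sum.inl a)
        = q * ((q * ((t : F) - 1) - 1) / d) := by
    intro a; rw [e1 a, hvX a]; ring
  have h2 : ∀ b : Fin t,
      (1 + (q - 1) * qDistKst F q s t (Sum.inr b) (Sum.inr w)) * xVecKst F q s t (Sum.inr b)
        = q ^ 2 * ((q * ((s : F) - 1) - 1) / d)
          + (if b = w then (1 - q ^ 2) * ((q * ((s : F) - 1) - 1) / d) else 0) := by
    intro b
    by_cases hb : b = w
    · subst hb; rw [e2, hvY b, if_pos rfl]; ring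
    · rw [e3 b hb, hvY b, if_neg hb]; ring
  rw [Finset.sum_congr rfl (fun a _ => h1 a), Finset.sum_congr rfl (fun b _ => h2 b),
    Finset.sum_add_distrib, Finset.sum_const, Finset.sum_const,
    Finset.sum_ite_eq' Finset.univ w]
  simp only [Finset.card_univ, Fintype.card_fin, Finset.mem_univ, if_true, nsmul_eq_mul]
  rw [hd]
  field_simp
  rw [div_eq_iff (by rw [show q ^ 2 * ((t : F) - 1) * ((s : F) - 1) - 1 = q ^ 2 * ((s : F) - 1) * ((t : F) - 1) - 1 by ring]; exact hΔ)]
  ring
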